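/- Let c, k be positive integers with k odd, let 0 ≤ j < c, and let d ≥ 0. If n ≥ (2d+1)·kc, then Φ_{kc}(q)^{d+1} divides ∑_{m ≡ j (mod c), 0 ≤ m ≤ n} (-1)^{(m-j)/c} binom(n,m)_q in ℤ[q]. -/

import Mathlib

open Polynomial Finset

/-- The Gaussian (q-)binomial coefficient as a polynomial, satisfying the
product formula `∏_{i=n-m+1}^{n}(1-q^i) / ∏_{i=1}^{m}(1-q^i)`. -/
noncomputable def qbinom (R : Type*) [CommRing R] : ℕ → ℕ → Polynomial R
  | _, 0 => 1
  | 0, _+1 => 0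
  | n+1, m+1 => qbinom R n (m+1) + X ^ (n - m) * qbinom R n m

section QB
variable (R : Type*) [CommRing R]

lemma qbinom_def (n m : ℕ) :
    qbinom R (n+1) (m+1) = qbinom R n (m+1) + X ^ (n - m) * qbinom R n m := rfl

lemma qbinom_zero_succ (m : ℕ) : qbinom R 0 (m+1) = 0 := rfl

lemma qbinom_zero_right (n : ℕ) : qbinom R n 0 = 1 := by cases n <;> rfl

lemma qbinom_eq_zero : ∀ {n m : ℕ}, n < m → qbinom R n m = 0
  | 0, m+1, _ => rfl
  | n+1, m+1, h => by
    rw [qbinom_def, qbinom_eq_zero (by omega), qbinom_eq_zero (by omega), mul_zero, add_zero]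

lemma qbinom_self : ∀ n : ℕ, qbinom R n n = 1
  | 0 => rfl
  | n+1 => by
    rw [qbinom_def, qbinom_eq_zero R (by omega), qbinom_self n, Nat.sub_self, pow_zero,
      zero_add, one_mul]

/-- second Pascal rule -/
lemma qbinom_succ_succ (n m : ℕ) :
    qbinom R (n+1) (m+1) = X ^ (m+1) * qbinom R n (m+1) + qbinom R n m := by
  induction n generalizing m with
  | zero =>
    cases m with
    | zero => simp [qbinom_def, qbinom_zero_succ, qbinom_zero_right]
    | succ m => simp [qbinom_def, qbinom_zero_succ]
  | succ n ih =>
    rcases lt_or_ge m (n+1) with hm | hm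
    · set p := n - m with hp
      have f3 : qbinom R (n+1+1) (m+1) =
          qbinom R (n+1) (m+1) + X ^ (p+1) * qbinom R (n+1) m := by
        rw [qbinom_def, show n + 1 - m = p + 1 by omega]
      cases m with
      | zero =>
        have g2 : qbinom R (n+1) 1 = qbinom R n 1 + X ^ p * 1 := by
          rw [qbinom_def, qbinom_zero_right, show n - 0 = p by omega]
        have f1 : qbinom R (n+1) 1 = X ^ 1 * qbinom R n 1 + 1 := by
          have := ih 0
          rwa [qbinom_zero_right] at this
        rw [qbinom_zero_right] at f3 ⊢
        linear_combination f3 - X * g2 + f1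
      | succ m =>
        have f1 : qbinom R (n+1) (m+2) = X ^ (m+2) * qbinom R n (m+2) + qbinom R n (m+1) :=
          ih (m+1)
        have f2 : qbinom R (n+1) (m+1) = X ^ (m+1) * qbinom R n (m+1) + qbinom R n m := ih m
        have g1 : qbinom R (n+1) (m+2) = qbinom R n (m+2) + X ^ p * qbinom R n (m+1) := by
          rw [qbinom_def, show n - (m+1) = p by omega]
        have g2 : qbinom R (n+1) (m+1) = qbinom R n (m+1) + X ^ (p+1) * qbinom R n m := by
          rw [qbinom_def, show n - m = p + 1 by omega]
        linear_combination f3 + f1 + X ^ (p+1) * f2 - X ^ (m+2) * g1 - g2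
    · rcases eq_or_lt_of_le hm with hme | hme
      · subst hme
        rw [qbinom_self, qbinom_eq_zero R (by omega : n+1 < n+1+1), qbinom_self, mul_zero,
          zero_add]
      · rw [qbinom_eq_zero R (by omega : n+1+1 < m+1), qbinom_eq_zero R (by omega : n+1 < m+1),
          qbinom_eq_zero R (by omega : n+1 < m), mul_zero, zero_add]

/-- combined form -/
lemma qbinom_succ (n m : ℕ) :
    qbinom R (n+1) m = X ^ m * qbinom R n m + (if m = 0 then 0 else qbinom R n (m-1)) := by
  cases m with
  | zero => simp [qbinom_zero_right]
  | succ m => simp [qbinom_succ_succ]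

end QB

section Fleck

/-- the basic weighted alternating sum of q-binomials -/
noncomputable def Ssum (c n l j : ℕ) (f : ℕ → ℤ) : Polynomial ℤ :=
  ∑ t ∈ range (n+1), C ((-1:ℤ)^t * f (j + t*c)) * X^(l*(j+t*c)) * qbinom ℤ n (j + t*c)

/-- representative of j - r mod c -/
def jr (c r j : ℕ) : ℕ := (j + (c - r % c)) % c

/-- the sign exponent -/
def ee (c r j : ℕ) : ℕ := (r + jr c r j - j) / c

variable {c : ℕ} (hc : 0 < c)

include hc in
lemma jr_lt (r j : ℕ) : jr c r j < c := Nat.mod_lt _ hc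

include hc in
lemma jr_char {j : ℕ} (hj : j < c) (r : ℕ) : (jr c r j + r) % c = j := by
  have h1 : c - r % c + r % c = c := Nat.sub_add_cancel (le_of_lt (Nat.mod_lt r hc))
  have h2 : j + (c - r % c) + r = j + c * (r / c + 1) := by
    have h3 := Nat.div_add_mod r c
    have h4 : c * (r / c + 1) = c * (r / c) + c := by ring
    omega
  calc (jr c r j + r) % c = (j + (c - r % c) + r) % c := by rw [jr, Nat.mod_add_mod]
    _ = (j + c * (r / c + 1)) % c := by rw [h2]
    _ = j % c := Nat.add_mul_mod_self_left j c _
    _ = j := Nat.mod_eq_of_lt hj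

include hc in
lemma jr_unique {j x r : ℕ} (hj : j < c) (hx : x < c) (hchar : (x + r) % c = j) :
    x = jr c r j := by
  have h1 := jr_char hc hj r
  have h2 : (x + r) % c = (jr c r j + r) % c := by rw [h1, hchar]
  have h3 : x % c = jr c r j % c := by
    have := Nat.ModEq.add_right_cancel' r h2
    exact this
  rwa [Nat.mod_eq_of_lt hx, Nat.mod_eq_of_lt (jr_lt hc r j)] at h3

include hc in
lemma jr_le {j : ℕ} (hj : j < c) (r : ℕ) : j ≤ jr c r j + r := by
  conv_lhs => rw [← jr_char hc hj r]
  exact Nat.mod_le _ _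

include hc in
lemma jr_dvd {j : ℕ} (hj : j < c) (r : ℕ) : c ∣ (r + jr c r j - j) := by
  have h1 : j ≡ jr c r j + r [MOD c] := by
    unfold Nat.ModEq
    rw [jr_char hc hj r, Nat.mod_eq_of_lt hj]
  have := (Nat.modEq_iff_dvd' (jr_le hc hj r)).mp h1
  rwa [add_comm (jr c r j) r] at this

include hc in
lemma ee_mul {j : ℕ} (hj : j < c) (r : ℕ) :
    c * ee c r j = r + jr c r j - j := Nat.mul_div_cancel' (jr_dvd hc hj r)

include hc in
lemma jr_zero {j : ℕ} (hj : j < c) : jr c 0 j = j :=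
  (jr_unique hc hj hj (by simpa using Nat.mod_eq_of_lt hj)).symm

include hc in
lemma ee_zero {j : ℕ} (hj : j < c) : ee c 0 j = 0 := by
  rw [ee, jr_zero hc hj]
  simp

include hc in
lemma jr_of_dvd {j r : ℕ} (hj : j < c) (hr : c ∣ r) : jr c r j = j := by
  refine (jr_unique hc hj hj ?_).symm
  obtain ⟨q, rfl⟩ := hr
  rw [Nat.add_mul_mod_self_left, Nat.mod_eq_of_lt hj]

include hc in
lemma ee_of_mul {j k : ℕ} (hj : j < c) : ee c (k * c) j = k := by
  rw [ee, jr_of_dvd hc hj ⟨k, mul_comm k c⟩]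
  rw [Nat.add_sub_cancel, Nat.mul_div_cancel _ hc]

include hc in
lemma jr_one_zero (h0 : 0 < c) : jr c 1 0 = c - 1 := by
  refine (jr_unique hc h0 (by omega) ?_).symm
  rw [Nat.sub_add_cancel (by omega), Nat.mod_self]

include hc in
lemma ee_one_zero : ee c 1 0 = 1 := by
  rw [ee, jr_one_zero hc hc, show 1 + (c-1) - 0 = c by omega, Nat.div_self hc]

include hc in
lemma jr_one_succ {j : ℕ} (hj : j + 1 < c) : jr c 1 (j+1) = j := by
  exact (jr_unique hc hj (by omega) (Nat.mod_eq_of_lt hj)).symm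

include hc in
lemma ee_one_succ {j : ℕ} (hj : j + 1 < c) : ee c 1 (j+1) = 0 := by
  rw [ee, jr_one_succ hc hj, show 1 + j - (j+1) = 0 by omega]
  simp

include hc in
lemma jr_step {j : ℕ} (hj : j < c) (r : ℕ) : jr c (r+1) j = jr c r (jr c 1 j) := by
  refine (jr_unique hc hj (jr_lt hc r _) ?_).symm
  have h1' : (jr c r (jr c 1 j) + r) ≡ jr c 1 j [MOD c] := by
    unfold Nat.ModEq
    rw [jr_char hc (jr_lt hc 1 j) r, Nat.mod_eq_of_lt (jr_lt hc 1 j)]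
  have h2' := h1'.add_right 1
  calc (jr c r (jr c 1 j) + (r+1)) % c
      = ((jr c r (jr c 1 j) + r) + 1) % c := by rw [add_assoc]
    _ = (jr c 1 j + 1) % c := h2'
    _ = j := jr_char hc hj 1

include hc in
lemma ee_step {j : ℕ} (hj : j < c) (r : ℕ) :
    ee c 1 j + ee c r (jr c 1 j) = ee c (r+1) j := by
  apply Nat.eq_of_mul_eq_mul_left hc
  rw [Nat.mul_add, ee_mul hc hj, ee_mul hc (jr_lt hc 1 j), ee_mul hc hj,
    ← jr_step hc hj r]
  have h1 := jr_le hc hj 1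
  have h2 := jr_le hc (jr_lt hc 1 j) r
  rw [← jr_step hc hj r] at h2
  omega

end Fleck

section Fleck2

variable {c : ℕ} (hc : 0 < c)

include hc in
lemma Ssum_ext (n l j : ℕ) (f : ℕ → ℤ) {T : ℕ} (hT : n + 1 ≤ T) :
    ∑ t ∈ range T, C ((-1:ℤ)^t * f (j + t*c)) * X^(l*(j+t*c)) * qbinom ℤ n (j + t*c) =
      Ssum c n l j f := by
  rw [Ssum]
  refine (Finset.sum_subset (by intro x hx; simp only [mem_range] at *; omega) ?_).symm
  intro t _ ht
  simp only [mem_range, not_lt] at ht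
  rw [qbinom_eq_zero ℤ (by nlinarith : n < j + t*c), mul_zero]

include hc in
lemma Ssum_pascal (n l j : ℕ) (hj : j < c) (f : ℕ → ℤ) :
    Ssum c (n+1) l j f = Ssum c n (l+1) j f
      + C ((-1:ℤ)^(ee c 1 j)) * X^l * Ssum c n l (jr c 1 j) (fun y => f (y+1)) := by
  have key : ∀ t : ℕ,
      C ((-1:ℤ)^t * f (j + t*c)) * X^(l*(j+t*c)) * qbinom ℤ (n+1) (j + t*c)
      = C ((-1:ℤ)^t * f (j + t*c)) * X^((l+1)*(j+t*c)) * qbinom ℤ n (j + t*c)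
        + C ((-1:ℤ)^t * f (j + t*c)) * X^(l*(j+t*c)) *
            (if j + t*c = 0 then 0 else qbinom ℤ n (j + t*c - 1)) := by
    intro t
    rw [qbinom_succ, mul_add, show (l+1)*(j+t*c) = l*(j+t*c) + (j+t*c) by ring, pow_add]
    ring
  have lhs_eq : Ssum c (n+1) l j f =
      (∑ t ∈ range (n+2),
        C ((-1:ℤ)^t * f (j + t*c)) * X^((l+1)*(j+t*c)) * qbinom ℤ n (j + t*c))
      + ∑ t ∈ range (n+2),
        C ((-1:ℤ)^t * f (j + t*c)) * X^(l*(j+t*c)) *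
          (if j + t*c = 0 then 0 else qbinom ℤ n (j + t*c - 1)) := by
    rw [Ssum, ← Finset.sum_add_distrib]
    exact Finset.sum_congr rfl (fun t _ => key t)
  rw [lhs_eq, Ssum_ext hc n (l+1) j f (by omega)]
  congr 1
  -- second sum equals the shifted Ssum
  rcases Nat.eq_zero_or_pos j with rfl | hj0
  · -- j = 0 case
    obtain ⟨c', rfl⟩ : ∃ c', c = c' + 1 := ⟨c - 1, by omega⟩
    rw [Finset.sum_range_succ' _ (n+1)]
    rw [if_pos (show 0 + 0*(c'+1) = 0 by omega), mul_zero, add_zero]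
    rw [ee_one_zero hc, jr_one_zero hc hc, pow_one, Ssum, Finset.mul_sum]
    refine Finset.sum_congr rfl ?_
    intro t _
    have hmul : (t+1)*(c'+1) = (c'+1) + t*(c'+1) := by ring
    rw [if_neg (show ¬ (0 + (t+1)*(c'+1) = 0) by omega)]
    have hidx : 0 + (t+1)*(c'+1) - 1 = (c'+1) - 1 + t*(c'+1) := by omega
    have hexp : l * (0 + (t+1)*(c'+1)) = l * ((c'+1) - 1 + t*(c'+1)) + l := by
      have h5 : l * (0 + (t+1)*(c'+1)) = l * ((c'+1) + t*(c'+1)) := by rw [← hmul]; ring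
      have h6 : (c'+1) - 1 + t*(c'+1) + 1 = (c'+1) + t*(c'+1) := by omega
      rw [h5, ← h6]
      ring
    have hval : f (0 + (t+1)*(c'+1)) = f ((c'+1) - 1 + t*(c'+1) + 1) := by
      congr 1
      omega
    rw [hidx, hexp, pow_add, hval]
    simp only [map_mul, pow_one]
    ring
  · -- j ≥ 1 case
    obtain ⟨j', rfl⟩ : ∃ j', j = j' + 1 := ⟨j - 1, by omega⟩
    rw [ee_one_succ hc hj, jr_one_succ hc hj, pow_zero, map_one, one_mul]
    have step : ∀ t : ℕ,
        C ((-1:ℤ)^t * f (j' + 1 + t*c)) * X^(l*(j'+1+t*c)) *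
          (if j' + 1 + t*c = 0 then 0 else qbinom ℤ n (j' + 1 + t*c - 1))
        = X^l * (C ((-1:ℤ)^t * f (j' + t*c + 1)) * X^(l*(j'+t*c)) * qbinom ℤ n (j' + t*c)) := by
      intro t
      rw [if_neg (by omega)]
      have hidx : j' + 1 + t*c - 1 = j' + t*c := by omega
      have hval : j' + 1 + t*c = j' + t*c + 1 := by omega
      have hexp : l*(j'+1+t*c) = l*(j'+t*c) + l := by ring
      rw [hidx, hexp, pow_add, hval]
      ring
    calc (∑ t ∈ range (n+2), C ((-1:ℤ)^t * f (j'+1 + t*c)) * X^(l*(j'+1+t*c)) *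
            (if j'+1+t*c = 0 then 0 else qbinom ℤ n (j'+1+t*c - 1)))
        = X^l * ∑ t ∈ range (n+2),
            C ((-1:ℤ)^t * f (j' + t*c + 1)) * X^(l*(j'+t*c)) * qbinom ℤ n (j' + t*c) := by
          rw [Finset.mul_sum]
          exact Finset.sum_congr rfl (fun t _ => step t)
      _ = X^l * Ssum c n l j' (fun y => f (y+1)) := by
          rw [Ssum_ext hc n l j' (fun y => f (y+1)) (by omega)]

end Fleck2

section Fleck3

variable {c : ℕ} (hc : 0 < c)

include hc in
lemma Ssum_vandermonde (np : ℕ) : ∀ (a l j : ℕ), j < c → ∀ f : ℕ → ℤ,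
    Ssum c (a + np) l j f = ∑ r ∈ range (a+1),
      C ((-1:ℤ)^(ee c r j)) * qbinom ℤ a r * X^(l*r) *
        Ssum c np (l + a - r) (jr c r j) (fun y => f (y + r)) := by
  intro a
  induction a with
  | zero =>
    intro l j hj f
    rw [Finset.sum_range_one, ee_zero hc hj, jr_zero hc hj, qbinom_zero_right]
    simp
  | succ a ih =>
    intro l j hj f
    have hstep : Ssum c (a + 1 + np) l j f = Ssum c (a + np) (l+1) j f
        + C ((-1:ℤ)^(ee c 1 j)) * X^l * Ssum c (a + np) l (jr c 1 j) (fun y => f (y+1)) := by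
      rw [show a + 1 + np = (a + np) + 1 by omega]
      exact Ssum_pascal hc (a+np) l j hj f
    rw [hstep, ih (l+1) j hj f, ih l (jr c 1 j) (jr_lt hc 1 j) (fun y => f (y+1))]
    -- now split the target sum
    have split : ∀ r : ℕ,
        C ((-1:ℤ)^(ee c r j)) * qbinom ℤ (a+1) r * X^(l*r) *
          Ssum c np (l + (a+1) - r) (jr c r j) (fun y => f (y + r))
        = C ((-1:ℤ)^(ee c r j)) * (X^r * qbinom ℤ a r) * X^(l*r) *
            Ssum c np (l + (a+1) - r) (jr c r j) (fun y => f (y + r))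
          + C ((-1:ℤ)^(ee c r j)) * (if r = 0 then 0 else qbinom ℤ a (r-1)) * X^(l*r) *
            Ssum c np (l + (a+1) - r) (jr c r j) (fun y => f (y + r)) := by
      intro r
      rw [qbinom_succ]
      ring
    rw [Finset.sum_congr rfl (fun r _ => split r), Finset.sum_add_distrib]
    congr 1
    · -- first piece = T1
      symm
      rw [Finset.sum_range_succ, qbinom_eq_zero ℤ (by omega : a < a + 1)]
      simp only [mul_zero, zero_mul, add_zero]
      refine Finset.sum_congr rfl ?_
      intro r hr
      simp only [mem_range] at hr
      have h1 : l + (a + 1) - r = l + 1 + a - r := by omega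
      have h2 : (l+1) * r = l * r + r := by ring
      rw [h1, h2, pow_add]
      ring
    · -- second piece = T2
      symm
      rw [Finset.sum_range_succ' _ (a+1), if_pos rfl]
      simp only [mul_zero, zero_mul, add_zero]
      rw [Finset.mul_sum]
      refine Finset.sum_congr rfl ?_
      intro r hr
      simp only [mem_range] at hr
      rw [if_neg (by omega : ¬ (r + 1 = 0))]
      have h1 : l + (a + 1) - (r + 1) = l + a - r := by omega
      have h2 : ee c (r+1) j = ee c 1 j + ee c r (jr c 1 j) := (ee_step hc hj r).symm
      have h3 : jr c (r+1) j = jr c r (jr c 1 j) := jr_step hc hj r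
      have h4 : l * (r+1) = l * r + l := by ring
      have h5 : (fun y => f (y + (r+1))) = (fun y => (fun z => f (z+1)) (y + r)) := rfl
      rw [h1, h2, h3, h4, pow_add, h5, Nat.add_sub_cancel, pow_add, map_mul]
      ring

end Fleck3

section Diff

/-- forward difference -/
def fdiff (f : ℕ → ℤ) : ℕ → ℤ := fun m => f (m+1) - f m

/-- integer-valued "degree at most s" -/
def Dle (s : ℕ) (f : ℕ → ℤ) : Prop := fdiff^[s+1] f = 0

lemma fdiff_zero_fn : fdiff (0 : ℕ → ℤ) = 0 := by
  funext m
  simp [fdiff]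

lemma Dle_succ_iff (s : ℕ) (f : ℕ → ℤ) : Dle (s+1) f ↔ Dle s (fdiff f) := by
  rw [Dle, Dle, Function.iterate_succ_apply]

lemma Dle_zero_fn (s : ℕ) : Dle s (0 : ℕ → ℤ) := by
  rw [Dle]
  exact Function.iterate_fixed fdiff_zero_fn _

lemma Dle_mono {s t : ℕ} {f : ℕ → ℤ} (h : Dle s f) (hst : s ≤ t) : Dle t f := by
  rw [Dle, show t + 1 = (t - s) + (s + 1) by omega, Function.iterate_add_apply, h]
  exact Function.iterate_fixed fdiff_zero_fn _

lemma fdiff_shift (f : ℕ → ℤ) (r : ℕ) :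
    fdiff (fun y => f (y + r)) = fun y => fdiff f (y + r) := by
  funext y
  simp only [fdiff]
  congr 2
  omega

lemma Dle_shift {s : ℕ} {f : ℕ → ℤ} (h : Dle s f) (r : ℕ) : Dle s (fun y => f (y + r)) := by
  rw [Dle] at h ⊢
  have : ∀ i : ℕ, fdiff^[i] (fun y => f (y + r)) = fun y => fdiff^[i] f (y + r) := by
    intro i
    induction i with
    | zero => rfl
    | succ i ih =>
      rw [Function.iterate_succ_apply', Function.iterate_succ_apply', ih, fdiff_shift]
  rw [this, h]
  rfl

lemma fdiff_add (f g : ℕ → ℤ) :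
    fdiff (fun m => f m + g m) = fun m => fdiff f m + fdiff g m := by
  funext m
  simp only [fdiff]
  ring

lemma Dle_add {s : ℕ} {f g : ℕ → ℤ} (hf : Dle s f) (hg : Dle s g) :
    Dle s (fun m => f m + g m) := by
  rw [Dle] at hf hg ⊢
  have : ∀ i : ℕ, fdiff^[i] (fun m => f m + g m) = fun m => fdiff^[i] f m + fdiff^[i] g m := by
    intro i
    induction i with
    | zero => rfl
    | succ i ih =>
      rw [Function.iterate_succ_apply', Function.iterate_succ_apply',
        Function.iterate_succ_apply', ih, fdiff_add]
  rw [this, hf, hg]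
  funext m
  simp

lemma Dle_const (s : ℕ) (a : ℤ) : Dle s (fun _ => a) := by
  refine Dle_mono ?_ (Nat.zero_le s)
  rw [Dle]
  funext m
  simp [fdiff]

lemma fdiff_mul (f g : ℕ → ℤ) :
    fdiff (fun m => f m * g m) =
      fun m => fdiff f m * g (m+1) + f m * fdiff g m := by
  funext m
  simp only [fdiff]
  ring

lemma Dle_mul_zero (f g : ℕ → ℤ) (hf : Dle 0 f) (hg : Dle 0 g) :
    Dle 0 (fun m => f m * g m) := by
  rw [Dle, Function.iterate_one] at hf hg ⊢
  funext m
  have h1 := congrFun hf m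
  have h2 := congrFun hg m
  simp only [fdiff, Pi.zero_apply] at h1 h2 ⊢
  have e1 : f (m+1) = f m := by omega
  have e2 : g (m+1) = g m := by omega
  rw [e1, e2]
  ring

lemma Dle_mul : ∀ (n a b : ℕ) (f g : ℕ → ℤ), a + b ≤ n → Dle a f → Dle b g →
    Dle (a+b) (fun m => f m * g m) := by
  intro n
  induction n with
  | zero =>
    intro a b f g hab hf hg
    obtain ⟨rfl, rfl⟩ : a = 0 ∧ b = 0 := by omega
    exact Dle_mul_zero f g hf hg
  | succ n ihn =>
    intro a b f g hab hf hg
    rcases Nat.eq_zero_or_pos (a + b) with h0 | hpos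
    · obtain ⟨rfl, rfl⟩ : a = 0 ∧ b = 0 := by omega
      exact Dle_mul_zero f g hf hg
    · obtain ⟨s, hs⟩ : ∃ s, a + b = s + 1 := ⟨a + b - 1, by omega⟩
      rw [hs, Dle_succ_iff, fdiff_mul]
      have term1 : Dle s (fun m => fdiff f m * g (m+1)) := by
        rcases Nat.eq_zero_or_pos a with rfl | ha
        · have : fdiff f = 0 := hf
          have hz : (fun m => fdiff f m * g (m+1)) = (0 : ℕ → ℤ) := by
            funext m
            rw [this]
            simp
          rw [hz]
          exact Dle_zero_fn s
        · obtain ⟨a', rfl⟩ : ∃ a', a = a' + 1 := ⟨a - 1, by omega⟩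
          have hf' : Dle a' (fdiff f) := (Dle_succ_iff a' f).mp hf
          have hg' : Dle b (fun m => g (m+1)) := Dle_shift hg 1
          have := ihn a' b (fdiff f) (fun m => g (m+1)) (by omega) hf' hg'
          exact Dle_mono this (by omega)
      have term2 : Dle s (fun m => f m * fdiff g m) := by
        rcases Nat.eq_zero_or_pos b with rfl | hb
        · have : fdiff g = 0 := hg
          have hz : (fun m => f m * fdiff g m) = (0 : ℕ → ℤ) := by
            funext m
            rw [this]
            simp
          rw [hz]
          exact Dle_zero_fn s
        · obtain ⟨b', rfl⟩ : ∃ b', b = b' + 1 := ⟨b - 1, by omega⟩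
          have hg' : Dle b' (fdiff g) := (Dle_succ_iff b' g).mp hg
          have := ihn a b' f (fdiff g) (by omega) hf hg'
          exact Dle_mono this (by omega)
      exact Dle_add term1 term2

lemma Dle_choose (i : ℕ) : Dle i (fun m => (m.choose i : ℤ)) := by
  induction i with
  | zero =>
    rw [Dle]
    funext m
    simp [fdiff]
  | succ i ih =>
    rw [Dle_succ_iff]
    have : fdiff (fun m => (m.choose (i+1) : ℤ)) = fun m => (m.choose i : ℤ) := by
      funext m
      simp only [fdiff]
      rw [Nat.choose_succ_succ]
      push_cast
      ring
    rw [this]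
    exact ih

lemma Dle_sub {s : ℕ} {f g : ℕ → ℤ} (hf : Dle s f) (hg : Dle s g) :
    Dle s (fun m => f m - g m) := by
  have hng : Dle s (fun m => (-1) * g m) :=
    Dle_mono (Dle_mul (0 + s) 0 s (fun _ => (-1:ℤ)) g le_rfl (Dle_const 0 _) hg) (by omega)
  have := Dle_add hf hng
  have heq : (fun m => f m + (-1) * g m) = (fun m => f m - g m) := by
    funext m
    ring
  rwa [heq] at this

lemma Dle_zero_const {f : ℕ → ℤ} (h : Dle 0 f) : ∀ m, f m = f 0 := by
  intro m
  induction m with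
  | zero => rfl
  | succ m ih =>
    have h1 : fdiff f m = 0 := by
      rw [Dle, Function.iterate_one] at h
      rw [h]
      rfl
    simp only [fdiff] at h1
    omega

lemma Dle_shiftN_sub {s : ℕ} {f : ℕ → ℤ} (h : Dle (s+1) f) (N : ℕ) :
    Dle s (fun m => f (m + N) - f m) := by
  induction N generalizing f with
  | zero =>
    have hz : (fun m => f (m + 0) - f m) = (0 : ℕ → ℤ) := by
      funext m
      simp
    rw [hz]
    exact Dle_zero_fn s
  | succ N ihN =>
    have h1 : Dle s (fun m => (fun y => f (y+1)) (m + N) - (fun y => f (y+1)) m) :=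
      ihN (Dle_shift h 1)
    have h2 : Dle s (fdiff f) := (Dle_succ_iff s f).mp h
    have heq : (fun m => f (m + (N+1)) - f m)
        = fun m => ((fun y => f (y+1)) (m + N) - (fun y => f (y+1)) m) + fdiff f m := by
      funext m
      simp only [fdiff]
      have : m + (N + 1) = m + N + 1 := by omega
      rw [this]
      ring
    rw [heq]
    exact Dle_add h1 h2

lemma Dle_zero_shiftN {f : ℕ → ℤ} (h : Dle 0 f) (N : ℕ) :
    (fun m => f (m + N) - f m) = (0 : ℕ → ℤ) := by
  funext m
  rw [Dle_zero_const h (m + N), Dle_zero_const h m]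
  simp

end Diff

section Cyclo

lemma qbinom_prod : ∀ (n m : ℕ),
    qbinom ℤ n m * ∏ i ∈ range m, ((X:Polynomial ℤ)^(i+1) - 1)
      = ∏ i ∈ range m, ((X:Polynomial ℤ)^(n-i) - 1) := by
  intro n
  induction n with
  | zero =>
    intro m
    cases m with
    | zero => simp [qbinom_zero_right]
    | succ m =>
      rw [qbinom_zero_succ, zero_mul]
      refine (Finset.prod_eq_zero (Finset.mem_range.mpr (by omega : 0 < m + 1)) ?_).symm
      simp
  | succ n ih =>
    intro m
    cases m with
    | zero => simp [qbinom_zero_right]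
    | succ m =>
      rcases le_or_gt m n with hm | hm
      · have f1 := ih (m+1)
        have f2 := ih m
        have f3 : (∏ i ∈ range (m+1), ((X:Polynomial ℤ)^(i+1) - 1))
            = (∏ i ∈ range m, ((X:Polynomial ℤ)^(i+1) - 1)) * (X^(m+1) - 1) :=
          Finset.prod_range_succ _ m
        have f4 : (∏ i ∈ range (m+1), ((X:Polynomial ℤ)^(n-i) - 1))
            = (∏ i ∈ range m, ((X:Polynomial ℤ)^(n-i) - 1)) * (X^(n-m) - 1) :=
          Finset.prod_range_succ _ m
        have f5 : (∏ i ∈ range (m+1), ((X:Polynomial ℤ)^(n+1-i) - 1))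
            = (∏ i ∈ range m, ((X:Polynomial ℤ)^(n-i) - 1)) * (X^(n+1) - 1) := by
          rw [Finset.prod_range_succ' (fun i => (X:Polynomial ℤ)^(n+1-i) - 1) m]
          congr 1
          exact Finset.prod_congr rfl (fun i _ => by rw [Nat.succ_sub_succ])
        have f6 : (X:Polynomial ℤ)^(n-m) * X^(m+1) = X^(n+1) := by
          rw [← pow_add]
          congr 1
          omega
        rw [qbinom_def, add_mul]
        linear_combination f1 + f4 + X^(n-m) * qbinom ℤ n m * f3
          + X^(n-m) * ((X:Polynomial ℤ)^(m+1) - 1) * f2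
          + (∏ i ∈ range m, ((X:Polynomial ℤ)^(n-i) - 1)) * f6 - f5
      · rw [qbinom_eq_zero ℤ (by omega : n + 1 < m + 1), zero_mul]
        refine (Finset.prod_eq_zero (Finset.mem_range.mpr (by omega : n + 1 < m + 1)) ?_).symm
        rw [Nat.sub_self]
        simp

variable {k c : ℕ} (hk0 : 0 < k) (hc : 0 < c)

include hk0 hc in
lemma cyclotomic_dvd_qbinom {r : ℕ} (hr0 : 0 < r) (hrN : r < k * c) :
    Polynomial.cyclotomic (k*c) ℤ ∣ qbinom ℤ (k*c) r := by
  have hN : 0 < k * c := by positivity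
  have hNne : k * c ≠ 0 := by omega
  obtain ⟨ζ, hζ⟩ : ∃ ζ : ℂ, IsPrimitiveRoot ζ (k*c) :=
    ⟨_, Complex.isPrimitiveRoot_exp (k*c) hNne⟩
  have hint : IsIntegral ℤ ζ := hζ.isIntegral hN
  have heval : (aeval ζ) (qbinom ℤ (k*c) r) = 0 := by
    have hid := congrArg (aeval ζ) (qbinom_prod (k*c) r)
    simp only [map_mul, map_prod, map_sub, map_pow, aeval_X, map_one] at hid
    have hrhs : ∏ i ∈ range r, (ζ^(k*c-i) - 1) = 0 := by
      refine Finset.prod_eq_zero (Finset.mem_range.mpr hr0) ?_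
      rw [Nat.sub_zero, hζ.pow_eq_one]
      ring
    rw [hrhs] at hid
    have hlhs : ∏ i ∈ range r, (ζ^(i+1) - 1) ≠ 0 := by
      refine Finset.prod_ne_zero_iff.mpr ?_
      intro i hi
      simp only [mem_range] at hi
      have := hζ.pow_ne_one_of_pos_of_lt (by omega : i+1 ≠ 0) (by omega : i+1 < k*c)
      intro hcontra
      exact this (by linear_combination hcontra)
    rcases mul_eq_zero.mp hid with h | h
    · exact h
    · exact absurd h hlhs
  have hmin : Polynomial.cyclotomic (k*c) ℤ = minpoly ℤ ζ :=
    Polynomial.cyclotomic_eq_minpoly hζ hN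
  rw [hmin]
  exact minpoly.isIntegrallyClosed_dvd hint heval

include hk0 hc in
lemma cyclotomic_dvd_u : Polynomial.cyclotomic (k*c) ℤ ∣ (X^(k*c) - 1 : Polynomial ℤ) := by
  have hN : 0 < k * c := by positivity
  have := Polynomial.prod_cyclotomic_eq_X_pow_sub_one hN ℤ
  rw [← this]
  exact Finset.dvd_prod_of_mem _ (Nat.mem_divisors_self _ (by omega))

end Cyclo

section Expand

/-- expansion of powers of X^N in powers of X^N - 1 -/
lemma X_pow_expand (N : ℕ) {m M : ℕ} (hm : m ≤ M) :
    (X:Polynomial ℤ)^(N*m) = ∑ i ∈ range (M+1), C ((m.choose i : ℤ)) * (X^N - 1)^i := by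
  have h1 : (X:Polynomial ℤ)^(N*m) = ((X^N - 1) + 1)^m := by
    rw [mul_comm, pow_mul]
    ring_nf
  have h2 : ∀ i : ℕ,
      (X^N - 1 : Polynomial ℤ)^i * 1^(m-i) * (m.choose i : Polynomial ℤ)
        = C ((m.choose i : ℤ)) * (X^N - 1)^i := by
    intro i
    rw [one_pow, mul_one, Polynomial.C_eq_natCast]
    ring
  rw [h1, add_pow, Finset.sum_congr rfl (fun i _ => h2 i)]
  refine Finset.sum_subset (by intro x hx; simp only [mem_range] at *; omega) ?_
  intro i _ hi
  simp only [mem_range, not_lt] at hi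
  rw [Nat.choose_eq_zero_of_lt (by omega : m < i)]
  simp

end Expand

section Combo

variable {c : ℕ} (hc : 0 < c)

include hc in
lemma Ssum_combo (N np l j : ℕ) (f : ℕ → ℤ) :
    Ssum c np (l + N) j f - X^(l*N) * Ssum c np l j (fun y => f (y + N))
    = (∑ i ∈ range (j + np*c + l + 1),
        (X^N - 1)^i * Ssum c np l j (fun m => (((m.choose i : ℤ)) - ((l.choose i : ℤ))) * f m))
      - X^(l*N) * Ssum c np l j (fun m => f (m + N) - f m) := by
  set Mb := j + np*c + l with hMb
  have hl : l ≤ Mb := by omega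
  have expand : ∀ t ∈ range (np+1),
      (X:Polynomial ℤ)^(N*(j+t*c)) - X^(N*l)
      = ∑ i ∈ range (Mb+1), C ((((j+t*c).choose i : ℤ)) - ((l.choose i : ℤ))) * (X^N-1)^i := by
    intro t ht
    simp only [mem_range] at ht
    have hm : j + t*c ≤ Mb := by
      have : t * c ≤ np * c := Nat.mul_le_mul_right c (by omega)
      omega
    rw [X_pow_expand N hm, X_pow_expand N hl, ← Finset.sum_sub_distrib]
    refine Finset.sum_congr rfl ?_
    intro i _
    rw [← sub_mul, ← map_sub]
  have key : ∀ t ∈ range (np+1),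
      C ((-1:ℤ)^t * f (j+t*c)) * X^((l+N)*(j+t*c)) * qbinom ℤ np (j+t*c)
        - X^(l*N) * (C ((-1:ℤ)^t * f (j+t*c+N)) * X^(l*(j+t*c)) * qbinom ℤ np (j+t*c))
      = (∑ i ∈ range (Mb+1), (X^N-1)^i *
            (C ((-1:ℤ)^t * (((((j+t*c).choose i : ℤ)) - ((l.choose i : ℤ))) * f (j+t*c))) *
              X^(l*(j+t*c)) * qbinom ℤ np (j+t*c)))
        - X^(l*N) * (C ((-1:ℤ)^t * (f (j+t*c+N) - f (j+t*c))) *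
            X^(l*(j+t*c)) * qbinom ℤ np (j+t*c)) := by
    intro t ht
    have hsplit : (X:Polynomial ℤ)^((l+N)*(j+t*c)) = X^(l*(j+t*c)) * X^(N*(j+t*c)) := by
      rw [← pow_add]
      congr 1
      ring
    have hsum : ∑ i ∈ range (Mb+1), (X^N-1)^i *
          (C ((-1:ℤ)^t * (((((j+t*c).choose i : ℤ)) - ((l.choose i : ℤ))) * f (j+t*c))) *
            X^(l*(j+t*c)) * qbinom ℤ np (j+t*c))
        = (C ((-1:ℤ)^t * f (j+t*c)) * X^(l*(j+t*c)) * qbinom ℤ np (j+t*c)) *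
            ((X:Polynomial ℤ)^(N*(j+t*c)) - X^(N*l)) := by
      rw [expand t ht, Finset.mul_sum]
      refine Finset.sum_congr rfl ?_
      intro i _
      simp only [map_mul]
      ring
    rw [hsum, hsplit]
    have hswap : (X:Polynomial ℤ)^(l*N) = X^(N*l) := by rw [mul_comm]
    simp only [mul_sub, sub_mul, map_sub, map_mul]
    rw [hswap]
    ring
  calc Ssum c np (l + N) j f - X^(l*N) * Ssum c np l j (fun y => f (y + N))
      = ∑ t ∈ range (np+1),
          (C ((-1:ℤ)^t * f (j+t*c)) * X^((l+N)*(j+t*c)) * qbinom ℤ np (j+t*c)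
            - X^(l*N) * (C ((-1:ℤ)^t * f (j+t*c+N)) * X^(l*(j+t*c)) * qbinom ℤ np (j+t*c))) := by
        rw [Ssum, Ssum, Finset.mul_sum, ← Finset.sum_sub_distrib]
    _ = ∑ t ∈ range (np+1),
          ((∑ i ∈ range (Mb+1), (X^N-1)^i *
            (C ((-1:ℤ)^t * (((((j+t*c).choose i : ℤ)) - ((l.choose i : ℤ))) * f (j+t*c))) *
              X^(l*(j+t*c)) * qbinom ℤ np (j+t*c)))
          - X^(l*N) * (C ((-1:ℤ)^t * (f (j+t*c+N) - f (j+t*c))) *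
              X^(l*(j+t*c)) * qbinom ℤ np (j+t*c))) := Finset.sum_congr rfl key
    _ = (∑ i ∈ range (Mb+1),
          (X^N - 1)^i * Ssum c np l j (fun m => (((m.choose i : ℤ)) - ((l.choose i : ℤ))) * f m))
        - X^(l*N) * Ssum c np l j (fun m => f (m + N) - f m) := by
        rw [Finset.sum_sub_distrib]
        congr 1
        · rw [Finset.sum_comm]
          refine Finset.sum_congr rfl ?_
          intro i _
          rw [Ssum, Finset.mul_sum]
        · rw [Ssum, Finset.mul_sum]

end Combo

section Master

lemma Ssum_zero_fn (c n l j : ℕ) : Ssum c n l j (0 : ℕ → ℤ) = 0 := by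
  simp [Ssum]

lemma Ssum_zero_fn' (c n l j : ℕ) : Ssum c n l j (fun _ => (0:ℤ)) = 0 := by
  simp [Ssum]

lemma sum_peel {M : Type*} [AddCommMonoid M] (g : ℕ → M) (N : ℕ) (hN : 0 < N) :
    ∑ r ∈ range (N+1), g r = (∑ r ∈ range (N-1), g (r+1)) + (g 0 + g N) := by
  obtain ⟨N', rfl⟩ : ∃ N', N = N'+1 := ⟨N-1, by omega⟩
  rw [Finset.sum_range_succ, Finset.sum_range_succ']
  simp only [Nat.add_sub_cancel]
  rw [add_assoc]

theorem master {k c : ℕ} (hc : 0 < c) (hk0 : 0 < k) (hk : Odd k) :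
    ∀ d s : ℕ, ∀ f : ℕ → ℤ, Dle s f → ∀ l j n : ℕ, j < c → (2*d+1+s) * (k*c) ≤ n →
      (Polynomial.cyclotomic (k*c) ℤ)^(d+1) ∣ Ssum c n l j f := by
  intro d
  induction d using Nat.strong_induction_on with
  | _ d ihd =>
  intro s
  induction s using Nat.strong_induction_on with
  | _ s ihs =>
  intro f hf l j n hj hn
  obtain ⟨en, rfl⟩ : ∃ en, n = (2*d+1+s)*(k*c) + en := ⟨n - (2*d+1+s)*(k*c), by omega⟩
  clear hn
  induction en generalizing f l j with
  | succ en ihe =>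
    have hstep : (2*d+1+s)*(k*c) + (en+1) = ((2*d+1+s)*(k*c) + en) + 1 := by omega
    rw [hstep, Ssum_pascal hc _ l j hj f]
    refine dvd_add (ihe f hf (l+1) j hj) ?_
    exact Dvd.dvd.mul_left (ihe (fun y => f (y+1)) (Dle_shift hf 1) l (jr c 1 j) (jr_lt hc 1 j)) _
  | zero =>
    have hNpos : 0 < k*c := by positivity
    have hbase : (2*d+1+s)*(k*c) + 0 = (k*c) + (2*d+s)*(k*c) := by ring
    rw [hbase, Ssum_vandermonde hc ((2*d+s)*(k*c)) (k*c) l j hj f, sum_peel _ _ hNpos]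
    refine dvd_add ?_ ?_
    · -- interior terms
      refine dvd_sum ?_
      intro r hr
      simp only [mem_range] at hr
      have h1 : Polynomial.cyclotomic (k*c) ℤ ∣ qbinom ℤ (k*c) (r+1) :=
        cyclotomic_dvd_qbinom hk0 hc (by omega) (by omega)
      have h2 : (Polynomial.cyclotomic (k*c) ℤ)^d ∣
          Ssum c ((2*d+s)*(k*c)) (l + (k*c) - (r+1)) (jr c (r+1) j) (fun y => f (y + (r+1))) := by
        cases d with
        | zero => simp
        | succ d' =>
          refine ihd d' (by omega) s (fun y => f (y + (r+1))) (Dle_shift hf _) _ _ _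
            (jr_lt hc _ j) ?_
          exact Nat.mul_le_mul_right _ (by omega)
      have h3 : (Polynomial.cyclotomic (k*c) ℤ)^(d+1) ∣
          qbinom ℤ (k*c) (r+1) *
            Ssum c ((2*d+s)*(k*c)) (l + (k*c) - (r+1)) (jr c (r+1) j) (fun y => f (y + (r+1))) := by
        rw [pow_succ']
        exact mul_dvd_mul h1 h2
      refine dvd_trans h3 ?_
      exact ⟨C ((-1:ℤ)^(ee c (r+1) j)) * X^(l*(r+1)), by ring⟩
    · -- boundary terms r = 0 and r = k*c
      have h0 : C ((-1:ℤ)^(ee c 0 j)) * qbinom ℤ (k*c) 0 * X^(l*0) *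
            Ssum c ((2*d+s)*(k*c)) (l + (k*c) - 0) (jr c 0 j) (fun y => f (y + 0))
          = Ssum c ((2*d+s)*(k*c)) (l + (k*c)) j f := by
        rw [ee_zero hc hj, jr_zero hc hj, qbinom_zero_right]
        simp
      have hNt : C ((-1:ℤ)^(ee c (k*c) j)) * qbinom ℤ (k*c) (k*c) * X^(l*(k*c)) *
            Ssum c ((2*d+s)*(k*c)) (l + (k*c) - (k*c)) (jr c (k*c) j) (fun y => f (y + (k*c)))
          = - (X^(l*(k*c)) * Ssum c ((2*d+s)*(k*c)) l j (fun y => f (y + (k*c)))) := by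
        rw [ee_of_mul hc hj, qbinom_self, Odd.neg_one_pow hk,
          jr_of_dvd hc hj (dvd_mul_left c k), Nat.add_sub_cancel]
        simp only [map_neg, map_one]
        ring
      rw [h0, hNt, ← sub_eq_add_neg, Ssum_combo hc (k*c) ((2*d+s)*(k*c)) l j f]
      refine dvd_sub ?_ ?_
      · -- the u-power expansion terms
        refine dvd_sum ?_
        intro i _
        rcases Nat.eq_zero_or_pos i with rfl | hi0
        · have hw : (fun m => ((m.choose 0 : ℤ) - ((l.choose 0 : ℤ))) * f m)
              = (fun _ => (0:ℤ)) := by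
            funext m
            simp
          rw [hw, Ssum_zero_fn', mul_zero]
          exact dvd_zero _
        · have hΦu : Polynomial.cyclotomic (k*c) ℤ ∣ (X^(k*c) - 1 : Polynomial ℤ) :=
            cyclotomic_dvd_u hk0 hc
          rcases le_or_gt i d with hid | hid
          · -- 1 ≤ i ≤ d
            have hwD : Dle (i + s) (fun m => ((m.choose i :ℤ) - ((l.choose i :ℤ))) * f m) :=
              Dle_mul (i+s) i s _ f le_rfl (Dle_sub (Dle_choose i) (Dle_const i _)) hf
            have hS : (Polynomial.cyclotomic (k*c) ℤ)^((d-1-i/2)+1) ∣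
                Ssum c ((2*d+s)*(k*c)) l j
                  (fun m => ((m.choose i :ℤ) - ((l.choose i:ℤ))) * f m) := by
              refine ihd (d-1-i/2) (by omega) (i+s) _ hwD l j _ hj ?_
              exact Nat.mul_le_mul_right _ (by omega)
            have hui : (Polynomial.cyclotomic (k*c) ℤ)^i ∣ (X^(k*c) - 1 : Polynomial ℤ)^i :=
              pow_dvd_pow_of_dvd hΦu i
            have h4 : (Polynomial.cyclotomic (k*c) ℤ)^(i + ((d-1-i/2)+1)) ∣
                (X^(k*c) - 1 : Polynomial ℤ)^i * Ssum c ((2*d+s)*(k*c)) l j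
                  (fun m => ((m.choose i :ℤ) - ((l.choose i:ℤ))) * f m) := by
              rw [pow_add]
              exact mul_dvd_mul hui hS
            exact dvd_trans (pow_dvd_pow _ (by omega : d+1 ≤ i + ((d-1-i/2)+1))) h4
          · -- i > d
            have h5 : (Polynomial.cyclotomic (k*c) ℤ)^(d+1) ∣ (X^(k*c) - 1 : Polynomial ℤ)^i :=
              dvd_trans (pow_dvd_pow_of_dvd hΦu (d+1)) (pow_dvd_pow _ (by omega))
            exact Dvd.dvd.mul_right h5 _
      · -- the shifted-difference term
        cases s with
        | zero =>
          rw [Dle_zero_shiftN hf (k*c), Ssum_zero_fn, mul_zero]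
          exact dvd_zero _
        | succ s' =>
          refine Dvd.dvd.mul_left ?_ _
          refine ihs s' (by omega) (fun m => f (m + (k*c)) - f m) (Dle_shiftN_sub hf (k*c))
            l j _ hj ?_
          exact Nat.mul_le_mul_right _ (by omega)

end Master

theorem q_fleck_special (c k : ℕ) (hc : 0 < c) (hk0 : 0 < k) (hk : Odd k)
    (j : ℕ) (hj : j < c) (d n : ℕ) (hn : (2 * d + 1) * (k * c) ≤ n) :
    Polynomial.cyclotomic (k * c) ℤ ^ (d + 1) ∣
      ∑ m ∈ (Finset.range (n + 1)).filter (fun m => m % c = j),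
        C ((-1 : ℤ) ^ ((m - j) / c)) * qbinom ℤ n m := by
  have hmain : (Polynomial.cyclotomic (k*c) ℤ)^(d+1) ∣ Ssum c n 0 j (fun _ => (1:ℤ)) :=
    master hc hk0 hk d 0 (fun _ => (1:ℤ)) (Dle_const 0 1) 0 j n hj hn
  suffices h : (∑ m ∈ (Finset.range (n + 1)).filter (fun m => m % c = j),
      C ((-1 : ℤ) ^ ((m - j) / c)) * qbinom ℤ n m) = Ssum c n 0 j (fun _ => (1:ℤ)) by
    rw [h]
    exact hmain
  have hsub : ∑ t ∈ (range (n+1)).filter (fun t => j + t*c ≤ n),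
      C ((-1:ℤ)^t * 1) * X^(0*(j+t*c)) * qbinom ℤ n (j+t*c)
      = Ssum c n 0 j (fun _ => (1:ℤ)) := by
    rw [Ssum]
    refine Finset.sum_subset (Finset.filter_subset _ _) ?_
    intro t ht hnt
    simp only [Finset.mem_filter, mem_range, not_and, not_le] at ht hnt
    rw [qbinom_eq_zero ℤ (hnt ht), mul_zero]
  rw [← hsub]
  refine Finset.sum_nbij' (fun m => (m - j)/c) (fun t => j + t*c) ?_ ?_ ?_ ?_ ?_
  · intro m hm
    simp only [Finset.mem_filter, mem_range] at hm ⊢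
    obtain ⟨hm1, hm2⟩ := hm
    have hjm : j ≤ m := by
      rw [← hm2]
      exact Nat.mod_le m c
    have hdvd : c ∣ m - j := by
      have h1 := Nat.div_add_mod m c
      have h2 : m - j = c * (m / c) := by omega
      exact ⟨m / c, h2⟩
    have h3 : (m - j)/c * c = m - j := Nat.div_mul_cancel hdvd
    constructor
    · have : (m-j)/c ≤ m - j := Nat.div_le_self _ _
      omega
    · omega
  · intro t ht
    simp only [Finset.mem_filter, mem_range] at ht ⊢
    obtain ⟨ht1, ht2⟩ := ht
    refine ⟨by omega, ?_⟩
    rw [Nat.add_mul_mod_self_right, Nat.mod_eq_of_lt hj]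
  · intro m hm
    simp only [Finset.mem_filter, mem_range] at hm
    obtain ⟨hm1, hm2⟩ := hm
    have hjm : j ≤ m := by
      rw [← hm2]
      exact Nat.mod_le m c
    have hdvd : c ∣ m - j := by
      have h1 := Nat.div_add_mod m c
      have h2 : m - j = c * (m / c) := by omega
      exact ⟨m / c, h2⟩
    have h3 : (m - j)/c * c = m - j := Nat.div_mul_cancel hdvd
    show j + (m - j)/c * c = m
    omega
  · intro t ht
    show (j + t*c - j)/c = t
    rw [Nat.add_sub_cancel_left, Nat.mul_div_cancel _ hc]
  · intro m hm
    simp only [Finset.mem_filter, mem_range] at hm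
    obtain ⟨hm1, hm2⟩ := hm
    have hjm : j ≤ m := by
      rw [← hm2]
      exact Nat.mod_le m c
    have hdvd : c ∣ m - j := by
      have h1 := Nat.div_add_mod m c
      have h2 : m - j = c * (m / c) := by omega
      exact ⟨m / c, h2⟩
    have h3 : (m - j)/c * c = m - j := Nat.div_mul_cancel hdvd
    have h4 : j + (m - j)/c * c = m := by omega
    rw [h4, mul_one, Nat.zero_mul, pow_zero]
    ring
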